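/- Let γ̃ : ℝ → ℂ be twice differentiable at t with γ̃(t) ≠ 0 and γ̃′(t) ≠ 0, and let γ(s) = γ̃(s)² (complex squaring). Then γ′(t) ≠ 0 and the signed curvatures are related by 2|γ̃(t)| · [Im(γ″(t) · conj(γ′(t))) / |γ′(t)|³] = Im(γ̃″(t) · conj(γ̃′(t))) / |γ̃′(t)|³ + Im(γ̃′(t) · conj(γ̃(t))) / (|γ̃(t)|² · |γ̃′(t)|). -/

import Mathlib

lemma im_key (a b c : ℂ) :
    ((b ^ 2 + a * c) * (starRingEnd ℂ) a * (starRingEnd ℂ) b).im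
      = Complex.normSq a * (c * (starRingEnd ℂ) b).im
        + Complex.normSq b * (b * (starRingEnd ℂ) a).im := by
  simp only [pow_two, Complex.normSq_apply, Complex.mul_im, Complex.mul_re, Complex.add_re,
    Complex.add_im, Complex.conj_re, Complex.conj_im]
  ring

/-- Let `γ̃ : ℝ → ℂ` be twice differentiable at `t` with `γ̃(t) ≠ 0` and `γ̃′(t) ≠ 0`, and
let `γ(s) = γ̃(s)²`. Then `γ′(t) ≠ 0` and the signed curvatures
`κ = Im(γ″ conj γ′)/|γ′|³` satisfy
`2|γ̃(t)| κ_γ(t) = κ_γ̃(t) + Im(γ̃′(t) conj γ̃(t)) / (|γ̃(t)|² |γ̃′(t)|)`. -/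
theorem curvature_under_squaring (γt : ℝ → ℂ) (t : ℝ)
    (h1 : DifferentiableAt ℝ γt t) (h2 : DifferentiableAt ℝ (deriv γt) t)
    (h0 : γt t ≠ 0) (h0' : deriv γt t ≠ 0) :
    let γ : ℝ → ℂ := fun s => (γt s) ^ 2
    deriv γ t ≠ 0 ∧
      2 * ‖γt t‖ *
          ((deriv (deriv γ) t * (starRingEnd ℂ) (deriv γ t)).im / ‖deriv γ t‖ ^ 3) =
        (deriv (deriv γt) t * (starRingEnd ℂ) (deriv γt t)).im / ‖deriv γt t‖ ^ 3 +
          (deriv γt t * (starRingEnd ℂ) (γt t)).im /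
            (‖γt t‖ ^ 2 * ‖deriv γt t‖) := by
  intro γ
  -- eventually γt is differentiable
  have hne : ∀ᶠ s in nhds t, deriv γt s ≠ 0 :=
    h2.continuousAt.eventually_ne h0'
  have hdiff : ∀ᶠ s in nhds t, DifferentiableAt ℝ γt s := by
    filter_upwards [hne] with s hs
    exact differentiableAt_of_deriv_ne_zero hs
  have hγ' : deriv γ =ᶠ[nhds t] fun s => 2 * γt s * deriv γt s := by
    filter_upwards [hdiff] with s hs
    show deriv (fun u => γt u ^ 2) s = _
    have : deriv (fun u => γt u * γt u) s = deriv γt s * γt s + γt s * deriv γt s :=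
      deriv_mul hs hs
    simp only [pow_two]
    rw [this]; ring
  set a := γt t
  set b := deriv γt t
  set c := deriv (deriv γt) t
  have hd1 : deriv γ t = 2 * a * b := hγ'.self_of_nhds
  have hd2 : deriv (deriv γ) t = 2 * (b ^ 2 + a * c) := by
    rw [hγ'.deriv_eq]
    have : deriv (fun s => 2 * γt s * deriv γt s) t
        = (2 * b) * b + (2 * a) * c := by
      simpa [deriv_const_mul _ h1] using
        deriv_fun_mul (c := fun s => 2 * γt s) (d := deriv γt) (h1.const_mul (2 : ℂ)) h2
    rw [this]; ring
  have hA : (0 : ℝ) < ‖a‖ := norm_pos_iff.mpr h0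
  have hB : (0 : ℝ) < ‖b‖ := norm_pos_iff.mpr h0'
  constructor
  · rw [hd1]
    exact mul_ne_zero (mul_ne_zero two_ne_zero h0) h0'
  · rw [hd1, hd2]
    have habs : ‖2 * a * b‖ = 2 * ‖a‖ * ‖b‖ := by
      simp [map_mul]
    rw [habs]
    have hnum : ((2 * (b ^ 2 + a * c)) * (starRingEnd ℂ) (2 * a * b)).im
        = 4 * ((b ^ 2 + a * c) * (starRingEnd ℂ) a * (starRingEnd ℂ) b).im := by
      have : (2 * (b ^ 2 + a * c)) * (starRingEnd ℂ) (2 * a * b)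
          = 4 * ((b ^ 2 + a * c) * (starRingEnd ℂ) a * (starRingEnd ℂ) b) := by
        simp [map_mul, Complex.conj_ofNat]; ring
      rw [this]
      simp [Complex.mul_im]
    rw [hnum, im_key]
    have hA2 : Complex.normSq a = ‖a‖ ^ 2 := (Complex.sq_norm a).symm
    have hB2 : Complex.normSq b = ‖b‖ ^ 2 := (Complex.sq_norm b).symm
    rw [hA2, hB2]
    field_simp
    ring
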